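/- Let k ≥ 1, m ≥ 1 and n ≥ 1 be integers, let C be a linear code of length n over R_{k,m}, and let χ : R_{k,m} → ℂ be any additive character (χ(x+y) = χ(x)χ(y) for all x,y and χ(0) = 1) whose restriction to every nonzero ideal of R_{k,m} is nontrivial. Then for every family of complex numbers (X_g)_{g ∈ R_{k,m}}: |C| · Σ_{b ∈ C^⊥} Π_{i=1}^{n} X_{b_i} = Σ_{c ∈ C} Π_{i=1}^{n} ( Σ_{g ∈ R_{k,m}} χ(c_i · g) · X_g ) (MacWilliams identity for complete weight enumerators over R_{k,m}). -/
import Mathlib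


open MvPolynomial

set_option synthInstance.maxHeartbeats 1000000
set_option maxHeartbeats 1000000

/-- The ring `R_{k,m} = F_2[u,v]/⟨u^k, v^m⟩`. -/
noncomputable abbrev Rkm (k m : ℕ) : Type :=
  MvPolynomial (Fin 2) (ZMod 2) ⧸
    (Ideal.span {(X 0 : MvPolynomial (Fin 2) (ZMod 2)) ^ k, (X 1 : MvPolynomial (Fin 2) (ZMod 2)) ^ m})

lemma Rkm_finite (k m : ℕ) : Finite (Rkm k m) := by
  set I : Ideal (MvPolynomial (Fin 2) (ZMod 2)) :=
    Ideal.span {(X 0 : MvPolynomial (Fin 2) (ZMod 2)) ^ k, (X 1 : MvPolynomial (Fin 2) (ZMod 2)) ^ m}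
  let f := Ideal.Quotient.mkₐ (ZMod 2) I
  have hsurj : Function.Surjective f := Ideal.Quotient.mkₐ_surjective _ _
  have hadj : Algebra.adjoin (ZMod 2) (f '' Set.range X) = ⊤ := by
    rw [← AlgHom.map_adjoin, MvPolynomial.adjoin_range_X, Algebra.map_top, AlgHom.range_eq_top]
    exact hsurj
  have hint : ∀ x ∈ f '' Set.range X, IsIntegral (ZMod 2) x := by
    rintro _ ⟨_, ⟨i, rfl⟩, rfl⟩
    fin_cases i
    · refine ⟨Polynomial.X ^ k, Polynomial.monic_X_pow k, ?_⟩
      simp only [Polynomial.eval₂_X_pow, ← map_pow]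
      exact Ideal.Quotient.eq_zero_iff_mem.2 (Ideal.subset_span (by simp))
    · refine ⟨Polynomial.X ^ m, Polynomial.monic_X_pow m, ?_⟩
      simp only [Polynomial.eval₂_X_pow, ← map_pow]
      exact Ideal.Quotient.eq_zero_iff_mem.2 (Ideal.subset_span (by simp))
  have hfg := fg_adjoin_of_finite (((Set.finite_range X).image f)) hint
  rw [hadj] at hfg
  have : Module.Finite (ZMod 2) (Rkm k m) := ⟨hfg⟩
  exact Module.finite_of_finite (ZMod 2)


/-- MacWilliams identity for the complete weight enumerators of a linear code over `R_{k,m}`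
and its dual, with respect to any generating character `χ` of `R_{k,m}`:
`|C| · cwe_{C^⊥}(X) = Σ_{c ∈ C} Π_i (Σ_g χ(c_i g) X_g)`. -/
theorem Rkm_macwilliams_cwe (k m n : ℕ) (hk : 1 ≤ k) (hm : 1 ≤ m) (hn : 1 ≤ n)
    (C : Submodule (Rkm k m) (Fin n → Rkm k m))
    (χ : Rkm k m → ℂ)
    (hχadd : ∀ x y : Rkm k m, χ (x + y) = χ x * χ y) (hχ0 : χ 0 = 1)
    (hχgen : ∀ I : Ideal (Rkm k m), I ≠ ⊥ → ∃ x ∈ I, χ x ≠ 1)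
    (Xv : Rkm k m → ℂ) :
    (Nat.card C : ℂ) *
      ∑ᶠ b ∈ {b : Fin n → Rkm k m | ∀ a ∈ C, ∑ i, a i * b i = 0}, ∏ i, Xv (b i) =
    ∑ᶠ c ∈ (C : Set (Fin n → Rkm k m)), ∏ i, ∑ᶠ g : Rkm k m, χ (c i * g) * Xv g := by
  classical
  haveI : Finite (Rkm k m) := Rkm_finite k m
  haveI : Fintype (Rkm k m) := Fintype.ofFinite _
  set D : Set (Fin n → Rkm k m) := {b | ∀ a ∈ C, ∑ i, a i * b i = 0} with hD
  have hχsum : ∀ {ι : Type} (s : Finset ι) (f : ι → Rkm k m),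
      χ (∑ i ∈ s, f i) = ∏ i ∈ s, χ (f i) := by
    intro ι s f
    induction s using Finset.cons_induction with
    | empty => simpa using hχ0
    | cons a s ha ih => rw [Finset.sum_cons, Finset.prod_cons, hχadd, ih]
  have key : ∀ b : Fin n → Rkm k m,
      ∑ c ∈ (C : Set (Fin n → Rkm k m)).toFinset, χ (∑ i, c i * b i) =
        if b ∈ D then ((C : Set (Fin n → Rkm k m)).toFinset.card : ℂ) else 0 := by
    intro b
    by_cases hb : b ∈ D
    · rw [if_pos hb]
      rw [Finset.sum_congr rfl (fun c hc => ?_), Finset.sum_const, nsmul_eq_mul, mul_one]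
      rw [hb c (by simpa using hc), hχ0]
    · rw [if_neg hb]
      set ψ : (Fin n → Rkm k m) →ₗ[Rkm k m] Rkm k m :=
        { toFun := fun a => ∑ i, a i * b i
          map_add' := by
            intro x y; simp [add_mul, Finset.sum_add_distrib]
          map_smul' := by
            intro r x; simp [Finset.mul_sum, mul_assoc] } with hψ
      have hJ : Submodule.map ψ C ≠ ⊥ := by
        simp only [hD, Set.mem_setOf_eq, not_forall] at hb
        obtain ⟨a, haC, hab⟩ := hb
        intro h
        exact hab (by
          have : ψ a ∈ Submodule.map ψ C := ⟨a, haC, rfl⟩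
          rw [h] at this
          simpa [hψ] using this)
      obtain ⟨x, hxJ, hx1⟩ := hχgen _ hJ
      obtain ⟨c₀, hc₀C, rfl⟩ := hxJ
      set S := ∑ c ∈ (C : Set (Fin n → Rkm k m)).toFinset, χ (∑ i, c i * b i) with hS
      have hfix : χ (ψ c₀) * S = S := by
        rw [hS, Finset.mul_sum]
        refine Finset.sum_nbij' (fun c => c₀ + c) (fun c => c - c₀) ?_ ?_ ?_ ?_ ?_
        · intro c hc
          simp only [Set.mem_toFinset] at hc ⊢
          exact C.add_mem hc₀C hc
        · intro c hc
          simp only [Set.mem_toFinset] at hc ⊢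
          exact C.sub_mem hc hc₀C
        · intro c _; funext i; simp
        · intro c _; funext i; simp
        · intro c _
          rw [← hχadd]
          congr 1
          simp [hψ, add_mul, Finset.sum_add_distrib]
      have hzero : (χ (ψ c₀) - 1) * S = 0 := by rw [sub_mul, hfix, one_mul, sub_self]
      rcases mul_eq_zero.1 hzero with h | h
      · exact absurd (by linear_combination h : χ (ψ c₀) = 1) hx1
      · exact h
  rw [finsum_mem_eq_toFinset_sum, finsum_mem_eq_toFinset_sum]
  have hcard : (Nat.card C : ℂ) = ((C : Set (Fin n → Rkm k m)).toFinset.card : ℂ) := by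
    have h1 : (C : Set (Fin n → Rkm k m)).toFinset.card = (C : Set (Fin n → Rkm k m)).ncard :=
      (Set.ncard_eq_toFinset_card' _).symm
    rw [h1, ← Nat.card_coe_set_eq]
    rfl
  calc ((Nat.card C : ℂ)) * ∑ b ∈ D.toFinset, ∏ i, Xv (b i)
      = ∑ b : Fin n → Rkm k m,
          (if b ∈ D then ((C : Set (Fin n → Rkm k m)).toFinset.card : ℂ) else 0)
          * ∏ i, Xv (b i) := by
        rw [hcard, Finset.mul_sum]
        simp only [ite_mul, zero_mul, ← Set.mem_toFinset]
        rw [Fintype.sum_ite_mem]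
    _ = ∑ b : Fin n → Rkm k m,
          (∑ c ∈ (C : Set (Fin n → Rkm k m)).toFinset, χ (∑ i, c i * b i))
          * ∏ i, Xv (b i) := by
        refine Finset.sum_congr rfl fun b _ => by rw [key b]
    _ = ∑ c ∈ (C : Set (Fin n → Rkm k m)).toFinset, ∏ i, ∑ᶠ g : Rkm k m, χ (c i * g) * Xv g := by
        simp only [Finset.sum_mul]
        rw [Finset.sum_comm]
        refine Finset.sum_congr rfl fun c hc => ?_
        have hfg : ∀ i, (∑ᶠ g : Rkm k m, χ (c i * g) * Xv g)
            = ∑ g ∈ Finset.univ, χ (c i * g) * Xv g :=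
          fun i => finsum_eq_sum_of_fintype _
        simp only [hfg]
        rw [Finset.prod_univ_sum, Fintype.piFinset_univ]
        refine Finset.sum_congr rfl fun b _ => ?_
        rw [hχsum, Finset.prod_mul_distrib]
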